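/- Let E ⊆ ℝ² be any nonempty proper subset and fix r > 0. Then the set A := {s ∈ ℝ² : dist(s, Eᶜ) = r} has Lebesgue measure zero. -/

import Mathlib

open MeasureTheory Metric

theorem stmt_5 (E : Set (EuclideanSpace ℝ (Fin 2))) (hne : E.Nonempty) (hproper : E ≠ Set.univ)
    (r : ℝ) (hr : 0 < r) :
    volume {s : EuclideanSpace ℝ (Fin 2) | Metric.infDist s Eᶜ = r} = 0 := by
  classical
  set A : Set (EuclideanSpace ℝ (Fin 2)) := {s : EuclideanSpace ℝ (Fin 2) | Metric.infDist s Eᶜ = r} with hAdef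
  by_contra hA0
  -- A is closed, hence measurable
  have hAclosed : IsClosed A := isClosed_eq (continuous_infDist_pt Eᶜ) continuous_const
  have hAmeas : MeasurableSet A := hAclosed.measurableSet
  -- Eᶜ is nonempty
  have hEc : Eᶜ.Nonempty := Set.nonempty_compl.2 hproper
  have hEcc : (closure Eᶜ).Nonempty := hEc.closure
  -- Lebesgue density theorem
  have hdens := Besicovitch.ae_tendsto_measure_inter_div (volume : Measure (EuclideanSpace ℝ (Fin 2))) A
  have hne' : (ae ((volume : Measure (EuclideanSpace ℝ (Fin 2))).restrict A)).NeBot := by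
    rw [ae_neBot, Ne, Measure.restrict_eq_zero]
    exact hA0
  obtain ⟨x, hx, hxA⟩ :=
    (hdens.and (ae_restrict_mem hAmeas)).exists
  -- x ∈ A :
  have hxr : Metric.infDist x Eᶜ = r := hxA
  -- nearest point z in closure Eᶜ
  obtain ⟨z, hz, hxz⟩ := isClosed_closure.exists_infDist_eq_dist hEcc x
  rw [Metric.infDist_closure, hxr] at hxz
  -- the key estimate: for every ρ ∈ Ioo 0 r, the density ratio is at most 15/16
  have key : ∀ ρ ∈ Set.Ioo (0:ℝ) r,
      volume (A ∩ closedBall x ρ) / volume (closedBall x ρ) ≤ 15/16 := by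
    intro ρ hρ
    obtain ⟨hρ0, hρr⟩ := hρ
    set k : ℝ := ρ / (2 * r) with hk
    have hk0 : 0 < k := by positivity
    have hk1 : k < 1 := by
      rw [hk, div_lt_one (by positivity)]
      linarith
    set y : EuclideanSpace ℝ (Fin 2) := x + k • (z - x) with hy
    have hdistzx : ‖z - x‖ = r := by
      rw [← dist_eq_norm, dist_comm, ← hxz]
    have hyx : dist y x = ρ / 2 := by
      rw [dist_eq_norm]
      have : y - x = k • (z - x) := by rw [hy]; abel
      rw [this, norm_smul, Real.norm_eq_abs, abs_of_pos hk0, hdistzx, hk]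
      field_simp
    have hyz : dist y z = r - ρ / 2 := by
      rw [dist_eq_norm]
      have : y - z = (1 - k) • (x - z) := by rw [hy]; module
      rw [this, norm_smul, Real.norm_eq_abs, abs_of_pos (by linarith), ← neg_sub z x,
        norm_neg, hdistzx, hk]
      field_simp
    -- the ball around y of radius ρ/4 misses A and sits inside closedBall x ρ
    have hball_sub : ball y (ρ/4) ⊆ closedBall x ρ := by
      intro w hw
      have := mem_ball.1 hw
      have := dist_triangle w y x
      rw [mem_closedBall]
      rw [hyx] at this
      linarith [mem_ball.1 hw]
    have hball_disj : Disjoint (A ∩ closedBall x ρ) (ball y (ρ/4)) := by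
      rw [Set.disjoint_left]
      rintro w ⟨hwA, -⟩ hw
      have hwz : dist w z < r := by
        have h1 := dist_triangle w y z
        have h2 := mem_ball.1 hw
        rw [hyz] at h1
        linarith
      have : Metric.infDist w Eᶜ < r := by
        calc Metric.infDist w Eᶜ = Metric.infDist w (closure Eᶜ) :=
              (Metric.infDist_closure).symm
          _ ≤ dist w z := Metric.infDist_le_dist_of_mem hz
          _ < r := hwz
      exact absurd hwA (by simpa [hAdef] using this.ne)
    -- volume computations
    set c : ENNReal := volume (ball (0:EuclideanSpace ℝ (Fin 2)) 1) with hc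
    have hdim : Module.finrank ℝ (EuclideanSpace ℝ (Fin 2)) = 2 := by
      simp [finrank_euclideanSpace]
    have hvol_cb : volume (closedBall x ρ) = ENNReal.ofReal (ρ^2) * c := by
      rw [Measure.addHaar_closedBall volume x hρ0.le, hdim]
    have hvol_b : volume (ball y (ρ/4)) = ENNReal.ofReal (ρ^2) / 16 * c := by
      rw [Measure.addHaar_ball volume y (by positivity : (0:ℝ) ≤ ρ/4), hdim]
      congr 1
      have : (ρ/4)^2 = ρ^2 / 16 := by ring
      rw [this, ENNReal.ofReal_div_of_pos (by norm_num)]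
      norm_num
    have hcfin : c ≠ ⊤ := measure_ball_lt_top.ne
    set t : ENNReal := ENNReal.ofReal (ρ^2) with ht
    have ht0 : t ≠ 0 := by
      simp [ht, ENNReal.ofReal_pos]
      positivity
    have htop : t ≠ ⊤ := ENNReal.ofReal_ne_top
    -- additivity
    have hsum : volume (A ∩ closedBall x ρ) + volume (ball y (ρ/4)) ≤
        volume (closedBall x ρ) := by
      rw [← measure_union hball_disj measurableSet_ball]
      exact measure_mono (Set.union_subset Set.inter_subset_right hball_sub)
    rw [hvol_cb, hvol_b] at hsum
    have hmain : volume (A ∩ closedBall x ρ) ≤ 15/16 * (t * c) := by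
      have h16 : (16:ENNReal) ≠ 0 := by norm_num
      have h16t : (16:ENNReal) ≠ ⊤ := by norm_num
      have hsplit : (15:ENNReal)/16 * (t * c) + t / 16 * c = t * c := by
        have e1 : t / 16 * c = 1/16 * (t * c) := by
          rw [div_eq_mul_inv, div_eq_mul_inv]; ring
        have e2 : (15:ENNReal) + 1 = 16 := by norm_num
        rw [e1, ← add_mul, ENNReal.div_add_div_same, e2, ENNReal.div_self h16 h16t, one_mul]
      calc volume (A ∩ closedBall x ρ)
          ≤ t * c - t / 16 * c := ENNReal.le_sub_of_add_le_right
              (ENNReal.mul_ne_top ((ENNReal.div_lt_top htop (by norm_num)).ne) hcfin) hsum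
        _ ≤ 15/16 * (t * c) := by
            rw [tsub_le_iff_right, hsplit]
    rw [hvol_cb]
    exact ENNReal.div_le_of_le_mul hmain
  -- contradiction with density 1
  have hlt : (15:ENNReal)/16 < 1 := by
    rw [ENNReal.div_lt_iff (by norm_num) (by norm_num)]
    norm_num
  have hev1 : ∀ᶠ ρ in nhdsWithin (0:ℝ) (Set.Ioi 0),
      15/16 < volume (A ∩ closedBall x ρ) / volume (closedBall x ρ) :=
    hx.eventually_const_lt hlt
  have hev2 : Set.Ioo (0:ℝ) r ∈ nhdsWithin (0:ℝ) (Set.Ioi 0) :=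
    Ioo_mem_nhdsGT_of_mem ⟨le_rfl, hr⟩
  obtain ⟨ρ, h1, h2⟩ := (hev1.and (Filter.eventually_iff_exists_mem.2 ⟨_, hev2, fun _ h => h⟩)).exists
  exact absurd (key ρ h2) (not_le.2 h1)
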